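/- Suppose f : A^n → B depends on all of its n variables, where 2 ≤ n ≤ |A|. If the quasi-arity of f is m < n, then the arity gap of f equals n − m. -/
import Mathlib


/-- Variable `i` is essential in `f`. -/
def EssAt {A B : Type*} {n : ℕ} (f : (Fin n → A) → B) (i : Fin n) : Prop :=
  ∃ a b : Fin n → A, (∀ j, j ≠ i → a j = b j) ∧ f a ≠ f b

/-- The essential arity of `f`: the number of essential variables. -/
noncomputable def essArity {A B : Type*} {n : ℕ} (f : (Fin n → A) → B) : ℕ :=
  Set.ncard {i : Fin n | EssAt f i}

/-- `A^n_=`: tuples with at least two equal coordinates (all of `A` when `n = 1`). -/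
def Aneq (A : Type*) (n : ℕ) : Set (Fin n → A) :=
  {a | n = 1 ∨ ∃ i j : Fin n, i ≠ j ∧ a i = a j}

/-- Variable `i` is essential in the restriction of `f` to `S` (witnesses must lie in `S`). -/
def EssAtOn {A B : Type*} {n : ℕ} (f : (Fin n → A) → B) (S : Set (Fin n → A)) (i : Fin n) : Prop :=
  ∃ a b : Fin n → A, a ∈ S ∧ b ∈ S ∧ (∀ j, j ≠ i → a j = b j) ∧ f a ≠ f b

/-- Essential arity of the restriction of `f` to `S`. -/
noncomputable def essArityOn {A B : Type*} {n : ℕ} (f : (Fin n → A) → B)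
    (S : Set (Fin n → A)) : ℕ :=
  Set.ncard {i : Fin n | EssAtOn f S i}

/-- `g` is a support of `f`: they agree on `A^n_=`. -/
def IsSupport {A B : Type*} {n : ℕ} (f g : (Fin n → A) → B) : Prop :=
  ∀ a ∈ Aneq A n, g a = f a

/-- The quasi-arity of `f`: minimum essential arity of a support of `f`. -/
noncomputable def qarity {A B : Type*} {n : ℕ} (f : (Fin n → A) → B) : ℕ :=
  sInf {m | ∃ g : (Fin n → A) → B, IsSupport f g ∧ essArity g = m}

/-- The variable identification minor `f_{i ← j}`: substitute `x_j` for `x_i`. -/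
def idMinor {A B : Type*} {n : ℕ} (f : (Fin n → A) → B) (i j : Fin n) :
    (Fin n → A) → B :=
  fun a => f (Function.update a i (a j))

/-- The arity gap of `f`: minimum of `ess f - ess f_{i←j}` over pairs of distinct
essential variables. -/
noncomputable def arityGap {A B : Type*} {n : ℕ} (f : (Fin n → A) → B) : ℕ :=
  sInf {d | ∃ i j : Fin n, i ≠ j ∧ EssAt f i ∧ EssAt f j ∧
    d = essArity f - essArity (idMinor f i j)}

section Aux
variable {A B : Type*} {n : ℕ}

lemma not_essAt_iff (g : (Fin n → A) → B) (i : Fin n) :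
    ¬ EssAt g i ↔ ∀ a b : Fin n → A, (∀ j, j ≠ i → a j = b j) → g a = g b := by
  unfold EssAt; push_neg; rfl

lemma minor_eq_of_support {f g : (Fin n → A) → B} (hs : IsSupport f g)
    {i j : Fin n} (hij : i ≠ j) : idMinor f i j = idMinor g i j := by
  funext a
  exact (hs _ (Or.inr ⟨i, j, hij, by
    simp [Function.update_of_ne hij.symm]⟩)).symm

lemma essat_minor {g : (Fin n → A) → B} {i j k : Fin n} (hij : i ≠ j)
    (hk : EssAt (idMinor g i j) k) :
    k ≠ i ∧ (EssAt g k ∨ (k = j ∧ EssAt g i)) := by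
  obtain ⟨a, b, hab, hne⟩ := hk
  have hne' : g (Function.update a i (a j)) ≠ g (Function.update b i (b j)) := hne
  have hki : k ≠ i := by
    intro hki'
    apply hne'
    have habj : a j = b j := hab j (fun h => hij (hki'.symm.trans h.symm))
    congr 1
    funext l
    by_cases hl : l = i
    · subst hl; simp [habj]
    · have hlk : l ≠ k := fun h => hl (h.trans hki')
      simp [Function.update_of_ne hl, hab l hlk]
  refine ⟨hki, ?_⟩
  by_cases hkj : k = j
  · by_cases h1 : g (Function.update a i (a j)) =
        g (Function.update (Function.update a i (a j)) j (b j))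
    · right
      refine ⟨hkj, Function.update (Function.update a i (a j)) j (b j),
        Function.update b i (b j), ?_, by rw [← h1]; exact hne'⟩
      intro l hl
      by_cases hlj : l = j
      · subst hlj
        simp [Function.update_self, Function.update_of_ne hij.symm]
      · have hlk : l ≠ k := fun h => hlj (h.trans hkj)
        simp [Function.update_of_ne hlj, Function.update_of_ne hl, hab l hlk]
    · left
      rw [hkj]
      exact ⟨Function.update a i (a j),
        Function.update (Function.update a i (a j)) j (b j),
        fun l hl => by simp [Function.update_of_ne hl], h1⟩
  · left
    refine ⟨Function.update a i (a j), Function.update b i (b j), ?_, hne'⟩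
    intro l hl
    by_cases hli : l = i
    · subst hli
      have : a j = b j := hab j (fun h => hkj h.symm)
      simp [this]
    · simp [Function.update_of_ne hli, hab l hl]

lemma essArity_minor_le (g : (Fin n → A) → B) {i j : Fin n} (hij : i ≠ j) :
    essArity (idMinor g i j) ≤ essArity g := by
  classical
  apply Set.ncard_le_ncard_of_injOn (fun k => if EssAt g k then k else i)
  · intro k hk
    obtain ⟨hki, h⟩ := essat_minor hij hk
    by_cases hgk : EssAt g k
    · simpa [hgk] using hgk
    · rcases h with h | ⟨_, hgi⟩
      · exact absurd h hgk
      · simpa [hgk] using hgi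
  · intro k1 h1 k2 h2 heq
    obtain ⟨h1i, h1'⟩ := essat_minor hij h1
    obtain ⟨h2i, h2'⟩ := essat_minor hij h2
    by_cases e1 : EssAt g k1
    · by_cases e2 : EssAt g k2
      · simpa [e1, e2] using heq
      · simp [e1, e2] at heq
        exact absurd heq h1i
    · by_cases e2 : EssAt g k2
      · simp [e1, e2] at heq
        exact absurd heq.symm h2i
      · rw [(h1'.resolve_left e1).1, (h2'.resolve_left e2).1]

end Aux

theorem stmt9 {A B : Type*} [Fintype A] {n m : ℕ} (hn2 : 2 ≤ n)
    (hnk : n ≤ Fintype.card A) (f : (Fin n → A) → B)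
    (hdep : ∀ i : Fin n, EssAt f i) (hm : m < n) (hq : qarity f = m) :
    arityGap f = n - m := by
  classical
  -- essArity f = n
  have hessf : essArity f = n := by
    have : {i : Fin n | EssAt f i} = Set.univ := by
      ext i; simp [hdep i]
    rw [essArity, this, Set.ncard_univ, Nat.card_eq_fintype_card, Fintype.card_fin]
  -- get a minimal support g
  have hne : {m | ∃ g : (Fin n → A) → B, IsSupport f g ∧ essArity g = m}.Nonempty :=
    ⟨essArity f, f, fun a _ => rfl, rfl⟩
  have hmem := Nat.sInf_mem hne
  rw [show sInf {m | ∃ g : (Fin n → A) → B, IsSupport f g ∧ essArity g = m} = qarity f from rfl,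
    hq] at hmem
  obtain ⟨g, hsupp, hg⟩ := hmem
  -- g has an inessential variable
  have hex : ∃ i : Fin n, ¬ EssAt g i := by
    by_contra h
    push_neg at h
    have : {i : Fin n | EssAt g i} = Set.univ := by ext i; simp [h i]
    rw [essArity, this, Set.ncard_univ, Nat.card_eq_fintype_card, Fintype.card_fin] at hg
    omega
  obtain ⟨i, hi⟩ := hex
  obtain ⟨j, hj⟩ := Fintype.exists_ne_of_one_lt_card (by simp; omega) i
  -- idMinor f i j = g
  have hminor : idMinor f i j = g := by
    funext a
    have h1 : f (Function.update a i (a j)) = g (Function.update a i (a j)) :=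
      (hsupp _ (Or.inr ⟨i, j, (Ne.symm hj), by
        simp [Function.update_of_ne hj]⟩)).symm
    have h2 : g (Function.update a i (a j)) = g a :=
      (not_essAt_iff g i).mp hi _ _ (fun l hl => Function.update_of_ne hl _ _)
    exact h1.trans h2
  apply le_antisymm
  · -- arityGap ≤ n - m : witness (i, j)
    apply Nat.sInf_le
    exact ⟨i, j, Ne.symm hj, hdep i, hdep j, by rw [hminor, hg, hessf]⟩
  · -- n - m ≤ arityGap
    have hsetne : {d | ∃ i j : Fin n, i ≠ j ∧ EssAt f i ∧ EssAt f j ∧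
        d = essArity f - essArity (idMinor f i j)}.Nonempty :=
      ⟨n - m, i, j, Ne.symm hj, hdep i, hdep j, by rw [hminor, hg, hessf]⟩
    apply le_csInf hsetne
    rintro d ⟨i', j', hij', -, -, rfl⟩
    have h1 : idMinor f i' j' = idMinor g i' j' := minor_eq_of_support hsupp hij'
    have h2 : essArity (idMinor g i' j') ≤ m := hg ▸ essArity_minor_le g hij'
    rw [hessf, h1]
    omega
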